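/- arXiv:1409.2811 — 3 statements merged into one kernel-verified Lean document; each statement's English description precedes it below -/
import Mathlib

section
/- Let W : ℝ^d → ℝ satisfy assumptions (A0)–(A2) and let ρ be a nonnegative finite Borel measure on ℝ^d. Then the velocity field â_ρ satisfies the one-sided Lipschitz estimate: for all x, y ∈ ℝ^d, (â_ρ(x) − â_ρ(y)) · (x − y) ≤ −λ ρ(ℝ^d) |x − y|². -/
open MeasureTheory Filter Metric
open scoped RealInnerProductSpace Topology BigOperators NNReal ENNReal Classical

noncomputable section

/-- The extended gradient `∇̂W`: `∇W(x)` for `x ≠ 0` and `0` at the origin. -/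
def hatGrad (d : ℕ) (W : EuclideanSpace ℝ (Fin d) → ℝ) (x : EuclideanSpace ℝ (Fin d)) :
    EuclideanSpace ℝ (Fin d) :=
  if x = 0 then 0 else gradient W x

/-- Assumptions (A0)-(A2): `W` is Lipschitz with constant `winf ≥ 0`, even, `W 0 = 0`,
`lam`-convex for some `lam ≤ 0`, continuously differentiable away from the origin,
with gradient bounded by `winf` away from the origin. -/
structure PointyPotential (d : ℕ) (W : EuclideanSpace ℝ (Fin d) → ℝ) (winf lam : ℝ) : Prop where
  winf_nonneg : 0 ≤ winf
  lipschitz : LipschitzWith (Real.toNNReal winf) W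
  even : ∀ x, W (-x) = W x
  zero_val : W 0 = 0
  lam_nonpos : lam ≤ 0
  lamConvex : ConvexOn ℝ Set.univ fun x => W x - lam / 2 * ‖x‖ ^ 2
  diffAway : ∀ x : EuclideanSpace ℝ (Fin d), x ≠ 0 → DifferentiableAt ℝ W x
  gradContinuous : ContinuousOn (gradient W) {x : EuclideanSpace ℝ (Fin d) | x ≠ 0}
  gradBound : ∀ x : EuclideanSpace ℝ (Fin d), x ≠ 0 → ‖gradient W x‖ ≤ winf

/-- The velocity field `â_ρ(x) = −∫ ∇̂W(x − y) ρ(dy)`. -/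
def aHat (d : ℕ) (W : EuclideanSpace ℝ (Fin d) → ℝ) (μ : Measure (EuclideanSpace ℝ (Fin d)))
    (x : EuclideanSpace ℝ (Fin d)) : EuclideanSpace ℝ (Fin d) :=
  -∫ y, hatGrad d W (x - y) ∂μ

lemma key_first_order {d : ℕ} {W : EuclideanSpace ℝ (Fin d) → ℝ} {winf lam : ℝ}
    (hW : PointyPotential d W winf lam) {b : EuclideanSpace ℝ (Fin d)} (hb : b ≠ 0)
    (z : EuclideanSpace ℝ (Fin d)) :
    ⟪gradient W b, z - b⟫ - lam * ⟪b, z - b⟫ ≤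
      (W z - lam / 2 * ‖z‖ ^ 2) - (W b - lam / 2 * ‖b‖ ^ 2) := by
  set v := z - b with hv
  have hc : HasDerivAt (fun t : ℝ => b + t • v) v 0 := by
    have h0 : HasDerivAt (fun t : ℝ => t • v) v 0 := by
      simpa using (hasDerivAt_id (0 : ℝ)).smul_const v
    simpa using h0.const_add b
  have hW' : HasFDerivAt W (InnerProductSpace.toDual ℝ _ (gradient W b))
      ((fun t : ℝ => b + t • v) 0) := by
    simpa using hasGradientAt_iff_hasFDerivAt.mp (hW.diffAway b hb).hasGradientAt
  have hcomp : HasDerivAt (fun t : ℝ => W (b + t • v)) ⟪gradient W b, v⟫ 0 := by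
    simpa [InnerProductSpace.toDual_apply_apply, Function.comp_def] using hW'.comp_hasDerivAt 0 hc
  have hexp : ∀ t : ℝ, ‖b + t • v‖ ^ 2 = ‖b‖ ^ 2 + 2 * ⟪b, v⟫ * t + ‖v‖ ^ 2 * t ^ 2 := by
    intro t
    rw [norm_add_sq_real, real_inner_smul_right, norm_smul]
    simp [Real.norm_eq_abs, mul_pow, sq_abs]
    ring
  have hn : HasDerivAt (fun t : ℝ => ‖b + t • v‖ ^ 2) (2 * ⟪b, v⟫) 0 := by
    have ha : HasDerivAt (fun t : ℝ => 2 * ⟪b, v⟫ * t) (2 * ⟪b, v⟫) 0 := by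
      simpa using (hasDerivAt_id (0 : ℝ)).const_mul (2 * ⟪b, v⟫)
    have hb2 : HasDerivAt (fun t : ℝ => ‖v‖ ^ 2 * t ^ 2) 0 0 := by
      simpa using (hasDerivAt_pow 2 (0 : ℝ)).const_mul (‖v‖ ^ 2)
    have h1 := (ha.const_add (‖b‖ ^ 2)).add hb2
    simp only [add_zero] at h1
    simpa only [hexp, ← add_assoc, Pi.add_def] using h1
  have hphi : HasDerivAt (fun t : ℝ => W (b + t • v) - lam / 2 * ‖b + t • v‖ ^ 2)
      (⟪gradient W b, v⟫ - lam * ⟪b, v⟫) 0 := by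
    have := hcomp.sub (hn.const_mul (lam / 2))
    have e : ⟪gradient W b, v⟫ - lam * ⟪b, v⟫ = ⟪gradient W b, v⟫ - lam / 2 * (2 * ⟪b, v⟫) := by
      ring
    rw [e]
    exact this
  have hconv : ConvexOn ℝ Set.univ (fun t : ℝ => W (b + t • v) - lam / 2 * ‖b + t • v‖ ^ 2) := by
    have h := hW.lamConvex.comp_affineMap (AffineMap.lineMap b z)
    have heq : ((fun x => W x - lam / 2 * ‖x‖ ^ 2) ∘ (AffineMap.lineMap b z)) =
        fun t : ℝ => W (b + t • v) - lam / 2 * ‖b + t • v‖ ^ 2 := by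
      funext t
      have : (AffineMap.lineMap b z) t = b + t • v := by
        simp [AffineMap.lineMap_apply, hv, add_comm]
      simp [Function.comp, this]
    rw [heq] at h
    simpa using h
  have hslope := hconv.le_slope_of_hasDerivAt (Set.mem_univ (0 : ℝ)) (Set.mem_univ (1 : ℝ))
    one_pos hphi
  have h1 : b + v = z := by simp [hv]
  have h0 : b + (0 : ℝ) • v = b := by simp
  simp only [slope, one_smul, h1, h0, vsub_eq_sub, sub_zero, inv_one, one_smul, smul_eq_mul] at hslope
  linarith [hslope]

lemma grad_inner_self {d : ℕ} {W : EuclideanSpace ℝ (Fin d) → ℝ} {winf lam : ℝ}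
    (hW : PointyPotential d W winf lam) {b : EuclideanSpace ℝ (Fin d)} (hb : b ≠ 0) :
    lam * ‖b‖ ^ 2 ≤ ⟪gradient W b, b⟫ := by
  have hkey := key_first_order hW hb 0
  have hVb : (0 : ℝ) ≤ W b - lam / 2 * ‖b‖ ^ 2 := by
    have hmid := hW.lamConvex.2 (Set.mem_univ b) (Set.mem_univ (-b))
      (by norm_num : (0:ℝ) ≤ (1:ℝ)/2) (by norm_num : (0:ℝ) ≤ (1:ℝ)/2) (by norm_num)
    have h0 : ((1:ℝ)/2) • b + ((1:ℝ)/2) • (-b) = (0 : EuclideanSpace ℝ (Fin d)) := by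
      simp
    rw [h0] at hmid
    have hWn : W (-b) = W b := hW.even b
    simp [hW.zero_val, hWn] at hmid
    linarith
  have e1 : ⟪gradient W b, (0:EuclideanSpace ℝ (Fin d)) - b⟫ = -⟪gradient W b, b⟫ := by
    rw [zero_sub, inner_neg_right]
  have e2 : ⟪b, (0:EuclideanSpace ℝ (Fin d)) - b⟫ = -(‖b‖ ^ 2) := by
    rw [zero_sub, inner_neg_right, real_inner_self_eq_norm_sq]
  rw [e1, e2, hW.zero_val] at hkey
  simp only [norm_zero] at hkey
  linarith

lemma hatGrad_mono {d : ℕ} {W : EuclideanSpace ℝ (Fin d) → ℝ} {winf lam : ℝ}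
    (hW : PointyPotential d W winf lam) (a b : EuclideanSpace ℝ (Fin d)) :
    lam * ‖a - b‖ ^ 2 ≤ ⟪hatGrad d W a - hatGrad d W b, a - b⟫ := by
  rcases eq_or_ne a 0 with ha | ha <;> rcases eq_or_ne b 0 with hb | hb
  · subst ha; subst hb; simp [hatGrad]
  · subst ha
    unfold hatGrad
    rw [if_pos rfl, if_neg hb]
    simp only [zero_sub, inner_neg_neg, norm_neg]
    exact grad_inner_self hW hb
  · subst hb
    unfold hatGrad
    rw [if_neg ha, if_pos rfl]
    simp only [sub_zero]
    exact grad_inner_self hW ha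
  · simp only [hatGrad, if_neg ha, if_neg hb]
    have k1 := key_first_order hW ha b
    have k2 := key_first_order hW hb a
    have e : b - a = -(a - b) := by abel
    rw [e, inner_neg_right, inner_neg_right] at k1
    have hs1 : ⟪gradient W a - gradient W b, a - b⟫
        = ⟪gradient W a, a - b⟫ - ⟪gradient W b, a - b⟫ := inner_sub_left _ _ _
    have hs2 : ⟪a, a - b⟫ - ⟪b, a - b⟫ = ‖a - b‖ ^ 2 := by
      rw [← inner_sub_left, real_inner_self_eq_norm_sq]
    rcases le_or_gt lam 0 with _ | _
    all_goals nlinarith [k1, k2, hs1, hs2]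

lemma hatGrad_measurable {d : ℕ} (W : EuclideanSpace ℝ (Fin d) → ℝ) :
    Measurable (hatGrad d W) := by
  have hgrad : Measurable (gradient W) := by
    have h := measurable_fderiv ℝ W
    exact ((InnerProductSpace.toDual ℝ
      (EuclideanSpace ℝ (Fin d))).symm.continuous.measurable).comp h
  unfold hatGrad
  exact Measurable.ite (by simp [Set.setOf_eq_eq_singleton]) measurable_const hgrad

lemma hatGrad_norm_le {d : ℕ} {W : EuclideanSpace ℝ (Fin d) → ℝ} {winf lam : ℝ}
    (hW : PointyPotential d W winf lam) (x : EuclideanSpace ℝ (Fin d)) :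
    ‖hatGrad d W x‖ ≤ winf := by
  unfold hatGrad
  split
  · simpa using hW.winf_nonneg
  · exact hW.gradBound _ (by assumption)

lemma hatGrad_integrable {d : ℕ} {W : EuclideanSpace ℝ (Fin d) → ℝ} {winf lam : ℝ}
    (hW : PointyPotential d W winf lam) (ρ : Measure (EuclideanSpace ℝ (Fin d)))
    [IsFiniteMeasure ρ] (p : EuclideanSpace ℝ (Fin d)) :
    Integrable (fun z => hatGrad d W (p - z)) ρ := by
  refine ⟨(((hatGrad_measurable W).comp
    (measurable_const.sub measurable_id)).aestronglyMeasurable), ?_⟩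
  exact HasFiniteIntegral.of_bounded (C := winf) (ae_of_all _ fun z => hatGrad_norm_le hW _)

/-- for `W` satisfying (A0)-(A2) and `ρ` a nonnegative finite Borel measure,
the velocity field `â_ρ` satisfies the one-sided Lipschitz estimate
`(â_ρ(x) − â_ρ(y)) · (x − y) ≤ −λ ρ(ℝ^d) |x − y|²`. -/
theorem aHat_one_sided_lipschitz
    {d : ℕ} (W : EuclideanSpace ℝ (Fin d) → ℝ) (winf lam : ℝ)
    (hW : PointyPotential d W winf lam)
    (ρ : Measure (EuclideanSpace ℝ (Fin d))) [IsFiniteMeasure ρ] :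
    ∀ x y : EuclideanSpace ℝ (Fin d),
      ⟪aHat d W ρ x - aHat d W ρ y, x - y⟫ ≤ -lam * (ρ Set.univ).toReal * ‖x - y‖ ^ 2 := by
  intro x y
  have hint : ∀ p : EuclideanSpace ℝ (Fin d),
      Integrable (fun z => hatGrad d W (p - z)) ρ := hatGrad_integrable hW ρ
  have hdiff : aHat d W ρ x - aHat d W ρ y
      = ∫ z, (hatGrad d W (y - z) - hatGrad d W (x - z)) ∂ρ := by
    simp only [aHat]
    rw [integral_sub (hint y) (hint x)]
    abel
  have hintsub : Integrable (fun z => hatGrad d W (y - z) - hatGrad d W (x - z)) ρ :=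
    (hint y).sub (hint x)
  rw [hdiff, real_inner_comm, ← integral_inner hintsub]
  have hpt : ∀ z, ⟪x - y, hatGrad d W (y - z) - hatGrad d W (x - z)⟫
      ≤ -lam * ‖x - y‖ ^ 2 := by
    intro z
    have hm := hatGrad_mono hW (x - z) (y - z)
    have he : (x - z) - (y - z) = x - y := by abel
    rw [he] at hm
    have : ⟪x - y, hatGrad d W (y - z) - hatGrad d W (x - z)⟫
        = -⟪hatGrad d W (x - z) - hatGrad d W (y - z), x - y⟫ := by
      rw [real_inner_comm, ← inner_neg_left]
      congr 1
      abel
    rw [this]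
    linarith
  have hmono := integral_mono (hintsub.const_inner (x - y))
    (integrable_const (-lam * ‖x - y‖ ^ 2)) hpt
  rw [integral_const, smul_eq_mul] at hmono
  calc ∫ z, ⟪x - y, hatGrad d W (y - z) - hatGrad d W (x - z)⟫ ∂ρ
      ≤ (ρ Set.univ).toReal * (-lam * ‖x - y‖ ^ 2) := hmono
    _ = -lam * (ρ Set.univ).toReal * ‖x - y‖ ^ 2 := by ring
end
end

section
/- Let W : ℝ^d → ℝ satisfy assumptions (A0)–(A2). Let (W_n)_{n≥1} be even functions in C¹(ℝ^d), each λ-convex with |∇W_n(x)| ≤ w_∞ for all x, and such that sup_{x ∈ ℝ^d \ B(0,1/n)} |∇W_n(x) − ∇W(x)| ≤ 1/n for all n ≥ 1. Let (ρ_n) be a sequence in 𝒫₂(ℝ^d) converging narrowly to ρ (i.e. ∫ f dρ_n → ∫ f dρ for every bounded continuous f). Then for Lebesgue-almost every x ∈ ℝ^d, lim_{n→∞} ∫_{ℝ^d} ∇W_n(x − y) ρ_n(dy) = ∫_{{y : y ≠ x}} ∇W(x − y) ρ(dy). -/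
open MeasureTheory Filter Metric
open scoped RealInnerProductSpace Topology BigOperators NNReal ENNReal Classical

noncomputable section

/-- A smooth even `lam`-convex approximating potential with gradient bounded by `winf`. -/
structure SmoothApproxPotential (d : ℕ) (Wn : EuclideanSpace ℝ (Fin d) → ℝ)
    (winf lam : ℝ) : Prop where
  smooth : ContDiff ℝ 1 Wn
  even : ∀ x, Wn (-x) = Wn x
  lamConvex : ConvexOn ℝ Set.univ fun x => Wn x - lam / 2 * ‖x‖ ^ 2
  gradBound : ∀ x, ‖gradient Wn x‖ ≤ winf

private theorem vsr_coordle {d : ℕ} (v : EuclideanSpace ℝ (Fin d)) (i : Fin d) : |v i| ≤ ‖v‖ := by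
  have h1 : |v i| = Real.sqrt (‖v i‖ ^ 2) := by
    rw [Real.sqrt_sq_eq_abs, Real.norm_eq_abs, abs_abs]
  rw [h1, EuclideanSpace.norm_eq]
  exact Real.sqrt_le_sqrt (Finset.single_le_sum (f := fun j => ‖v j‖ ^ 2)
    (fun j _ => sq_nonneg _) (Finset.mem_univ i))

private theorem vsr_int_bdd {d : ℕ} (μ : Measure (EuclideanSpace ℝ (Fin d)))
    [IsProbabilityMeasure μ]
    {f : EuclideanSpace ℝ (Fin d) → EuclideanSpace ℝ (Fin d)}
    (hm : AEStronglyMeasurable f μ) {C : ℝ} (hb : ∀ y, ‖f y‖ ≤ C) : Integrable f μ :=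
  ⟨hm, HasFiniteIntegral.of_bounded (C := C) (ae_of_all _ hb)⟩

private theorem vsr_int_est {d : ℕ} (μ : Measure (EuclideanSpace ℝ (Fin d)))
    [IsProbabilityMeasure μ]
    {f : EuclideanSpace ℝ (Fin d) → EuclideanSpace ℝ (Fin d)} (hf : Integrable f μ)
    {s : Set (EuclideanSpace ℝ (Fin d))} (hs : MeasurableSet s) {a c : ℝ}
    (hb : ∀ y, ‖f y‖ ≤ a + s.indicator (fun _ => c) y) :
    ‖∫ y, f y ∂μ‖ ≤ a + c * (μ s).toReal := by
  have hind : Integrable (s.indicator (fun _ => c)) μ := (integrable_const c).indicator hs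
  calc ‖∫ y, f y ∂μ‖ ≤ ∫ y, ‖f y‖ ∂μ := norm_integral_le_integral_norm f
    _ ≤ ∫ y, (a + s.indicator (fun _ => c) y) ∂μ :=
        integral_mono hf.norm ((integrable_const a).add hind) hb
    _ = a + c * (μ s).toReal := by
        rw [integral_add (integrable_const a) hind, integral_const,
          integral_indicator_const _ hs]
        simp [mul_comm, Measure.real]

private theorem vsr_mass_small {d : ℕ} (ρn : ℕ → Measure (EuclideanSpace ℝ (Fin d)))
    (ρ : Measure (EuclideanSpace ℝ (Fin d)))
    (hρn : ∀ n, IsProbabilityMeasure (ρn n)) (hρ : IsProbabilityMeasure ρ)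
    (hnarrow : ∀ f : BoundedContinuousFunction (EuclideanSpace ℝ (Fin d)) ℝ,
      Tendsto (fun n => ∫ x, f x ∂(ρn n)) atTop (𝓝 (∫ x, f x ∂ρ)))
    (x : EuclideanSpace ℝ (Fin d)) {δ ε : ℝ} (hδ : 0 < δ)
    (hball : ((ρ (closedBall x (2*δ))).toReal) < ε) :
    ∀ᶠ n in atTop, ((ρn n) (closedBall x δ)).toReal < ε := by
  set ψ : EuclideanSpace ℝ (Fin d) → ℝ := fun y => max 0 (min 1 (2 - dist y x / δ)) with hψ
  have hψcont : Continuous ψ := by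
    apply continuous_const.max
    exact continuous_const.min
      (continuous_const.sub ((continuous_id.dist continuous_const).div_const δ))
  have hψ0 : ∀ y, 0 ≤ ψ y := fun y => le_max_left _ _
  have hψ1 : ∀ y, ψ y ≤ 1 := fun y => by
    apply max_le zero_le_one
    exact min_le_left _ _
  have hψone : ∀ y ∈ closedBall x δ, ψ y = 1 := by
    intro y hy
    rw [mem_closedBall] at hy
    have : (1:ℝ) ≤ 2 - dist y x / δ := by
      have h2 : dist y x / δ ≤ 1 := (div_le_one hδ).2 hy
      linarith
    simp only [hψ, min_eq_left this]
    exact max_eq_right zero_le_one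
  have hψzero : ∀ y, 2*δ < dist y x → ψ y = 0 := by
    intro y hy
    have h2 : 2 - dist y x / δ < 0 := by
      have := (lt_div_iff₀ hδ).2 (by linarith : 2 * δ < dist y x)
      linarith
    simp only [hψ]
    rw [min_eq_right (by linarith), max_eq_left (by linarith)]
  set F : BoundedContinuousFunction (EuclideanSpace ℝ (Fin d)) ℝ :=
    BoundedContinuousFunction.mkOfBound ⟨ψ, hψcont⟩ 1 (fun a b => by
      rw [Real.dist_eq, abs_sub_le_iff]
      have h0a := hψ0 a; have h1a := hψ1 a; have h0b := hψ0 b; have h1b := hψ1 b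
      have ea : ({ toFun := ψ, continuous_toFun := hψcont } : ContinuousMap _ _) a = ψ a := rfl
      have eb : ({ toFun := ψ, continuous_toFun := hψcont } : ContinuousMap _ _) b = ψ b := rfl
      rw [ea, eb]
      constructor <;> linarith ) with hF
  have hFψ : ∀ y, F y = ψ y := fun _ => rfl
  have hlim : Tendsto (fun n => ∫ y, F y ∂(ρn n)) atTop (𝓝 (∫ y, F y ∂ρ)) := hnarrow F
  have hFρ : ∫ y, F y ∂ρ < ε := by
    have hle : ∫ y, F y ∂ρ ≤ (ρ (closedBall x (2*δ))).toReal := by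
      have : ∫ y, F y ∂ρ ≤ ∫ y, (closedBall x (2*δ)).indicator (fun _ => (1:ℝ)) y ∂ρ := by
        apply integral_mono (F.integrable ρ)
          ((integrable_const (1:ℝ)).indicator measurableSet_closedBall)
        intro y
        by_cases hy : y ∈ closedBall x (2*δ)
        · rw [Set.indicator_of_mem hy]; exact hψ1 y
        · rw [Set.indicator_of_notMem hy, hFψ, hψzero y (by
            rw [mem_closedBall, not_le] at hy; exact hy)]
      rwa [integral_indicator_const _ measurableSet_closedBall, smul_eq_mul, mul_one] at this
    linarith
  have hev := hlim.eventually_lt_const hFρ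
  filter_upwards [hev] with n hn
  have hle : ((ρn n) (closedBall x δ)).toReal ≤ ∫ y, F y ∂(ρn n) := by
    have : ∫ y, (closedBall x δ).indicator (fun _ => (1:ℝ)) y ∂(ρn n) ≤ ∫ y, F y ∂(ρn n) := by
      apply integral_mono ((integrable_const (1:ℝ)).indicator measurableSet_closedBall)
        (F.integrable (ρn n))
      intro y
      by_cases hy : y ∈ closedBall x δ
      · rw [Set.indicator_of_mem hy, hFψ, hψone y hy]
      · rw [Set.indicator_of_notMem hy]; exact hψ0 y
    rwa [integral_indicator_const _ measurableSet_closedBall, smul_eq_mul, mul_one] at this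
  linarith

private theorem vsr_tendsto_vec_integral {d : ℕ} (ρn : ℕ → Measure (EuclideanSpace ℝ (Fin d)))
    (ρ : Measure (EuclideanSpace ℝ (Fin d)))
    (hρn : ∀ n, IsProbabilityMeasure (ρn n)) (hρ : IsProbabilityMeasure ρ)
    (hnarrow : ∀ f : BoundedContinuousFunction (EuclideanSpace ℝ (Fin d)) ℝ,
      Tendsto (fun n => ∫ x, f x ∂(ρn n)) atTop (𝓝 (∫ x, f x ∂ρ)))
    (h : EuclideanSpace ℝ (Fin d) → EuclideanSpace ℝ (Fin d)) (hc : Continuous h)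
    {C : ℝ} (hC : ∀ y, ‖h y‖ ≤ C) :
    Tendsto (fun n => ∫ y, h y ∂(ρn n)) atTop (𝓝 (∫ y, h y ∂ρ)) := by
  have hint : ∀ (μ : Measure (EuclideanSpace ℝ (Fin d))), IsProbabilityMeasure μ →
      Integrable h μ := fun μ hμ => vsr_int_bdd μ hc.aestronglyMeasurable hC
  rw [(EuclideanSpace.equiv (Fin d) ℝ).toHomeomorph.isInducing.tendsto_nhds_iff]
  refine tendsto_pi_nhds.2 fun i => ?_
  have hcoord : ∀ (μ : Measure (EuclideanSpace ℝ (Fin d))), IsProbabilityMeasure μ →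
      (∫ y, h y ∂μ) i = ∫ y, h y i ∂μ := by
    intro μ hμ
    exact ((EuclideanSpace.proj (𝕜 := ℝ) i).integral_comp_comm (hint μ hμ)).symm
  have key : Tendsto (fun n => ∫ y, h y i ∂(ρn n)) atTop (𝓝 (∫ y, h y i ∂ρ)) := by
    set F : BoundedContinuousFunction (EuclideanSpace ℝ (Fin d)) ℝ :=
      BoundedContinuousFunction.mkOfBound
        ⟨fun y => h y i, ((EuclideanSpace.proj (𝕜 := ℝ) i).continuous.comp hc : _)⟩
        (2*C) (fun a b => by
          have ha := (vsr_coordle (h a) i).trans (hC a)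
          have hb := (vsr_coordle (h b) i).trans (hC b)
          rw [Real.dist_eq]
          calc |h a i - h b i| ≤ |h a i| + |h b i| := abs_sub _ _
            _ ≤ 2*C := by linarith)
    exact hnarrow F
  have heq : ∀ (v : EuclideanSpace ℝ (Fin d)),
      (EuclideanSpace.equiv (Fin d) ℝ).toHomeomorph v i = v i := fun _ => rfl
  simp only [Function.comp_def, heq, hcoord _ (hρn _), hcoord _ hρ]
  exact key

set_option maxHeartbeats 2000000 in
/-- if `W_n` are smooth even `λ`-convex potentials approximating the pointy
potential `W` uniformly away from the origin and `ρ_n ∈ 𝒫₂(ℝ^d)` converge narrowly to `ρ`,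
then for Lebesgue-a.e. `x`, `∫ ∇W_n(x−y) ρ_n(dy) → ∫_{y ≠ x} ∇W(x−y) ρ(dy)`. -/
theorem velocity_stability_regularized_ae
    {d : ℕ} (W : EuclideanSpace ℝ (Fin d) → ℝ) (winf lam : ℝ)
    (hW : PointyPotential d W winf lam)
    (Wn : ℕ → EuclideanSpace ℝ (Fin d) → ℝ)
    (hWn : ∀ n : ℕ, 1 ≤ n → SmoothApproxPotential d (Wn n) winf lam)
    (happrox : ∀ n : ℕ, 1 ≤ n → ∀ x : EuclideanSpace ℝ (Fin d), (1 : ℝ) / n ≤ ‖x‖ →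
      ‖gradient (Wn n) x - gradient W x‖ ≤ 1 / n)
    (ρn : ℕ → Measure (EuclideanSpace ℝ (Fin d)))
    (ρ : Measure (EuclideanSpace ℝ (Fin d)))
    (hρn : ∀ n, IsProbabilityMeasure (ρn n))
    (hρn2 : ∀ n, Integrable (fun x => ‖x‖ ^ 2) (ρn n))
    (hρ : IsProbabilityMeasure ρ) (hρ2 : Integrable (fun x => ‖x‖ ^ 2) ρ)
    (hnarrow : ∀ f : BoundedContinuousFunction (EuclideanSpace ℝ (Fin d)) ℝ,
      Tendsto (fun n => ∫ x, f x ∂(ρn n)) atTop (𝓝 (∫ x, f x ∂ρ))) :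
    ∀ᵐ x ∂(volume : Measure (EuclideanSpace ℝ (Fin d))),
      Tendsto
        (fun n => ∫ y, gradient (Wn n) (x - y) ∂(ρn n))
        atTop
        (𝓝 (∫ y in {y : EuclideanSpace ℝ (Fin d) | y ≠ x}, gradient W (x - y) ∂ρ)) := by
  rcases Nat.eq_zero_or_pos d with hd | hd
  · subst hd
    haveI : Subsingleton (EuclideanSpace ℝ (Fin 0)) :=
      ⟨fun a b => by ext i; exact i.elim0⟩
    refine ae_of_all _ fun x => ?_
    have hz : ∀ v : EuclideanSpace ℝ (Fin 0), v = 0 := fun v => Subsingleton.elim _ _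
    have h1 : (fun n => ∫ y, gradient (Wn n) (x - y) ∂(ρn n))
        = fun _ => (0 : EuclideanSpace ℝ (Fin 0)) := funext fun n => hz _
    rw [h1, hz (∫ y in {y : EuclideanSpace ℝ (Fin 0) | y ≠ x}, gradient W (x - y) ∂ρ)]
    exact tendsto_const_nhds
  -- now d > 0
  haveI : Nontrivial (EuclideanSpace ℝ (Fin d)) := by
    refine ⟨EuclideanSpace.single ⟨0, hd⟩ (1:ℝ), 0, fun h => ?_⟩
    have := congrArg (fun v => v ⟨0, hd⟩) h
    simp [EuclideanSpace.single_apply] at this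
  have hae : ∀ᵐ x ∂(volume : Measure (EuclideanSpace ℝ (Fin d))), ρ {x} = 0 := by
    have hcnt : Set.Countable {x : EuclideanSpace ℝ (Fin d) | ρ {x} ≠ 0} := by
      have := MeasureTheory.Measure.countable_meas_pos_of_disjoint_iUnion₀ (μ := ρ)
        (As := fun x : EuclideanSpace ℝ (Fin d) => {x})
        (fun i => (measurableSet_singleton i).nullMeasurableSet)
        (fun i j hij => (Set.disjoint_singleton.2 hij).aedisjoint)
      convert this using 1
      ext x
      simp [pos_iff_ne_zero]
    rw [ae_iff]
    exact hcnt.measure_zero _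
  filter_upwards [hae] with x hx
  -- the truncated kernel
  set G : EuclideanSpace ℝ (Fin d) → EuclideanSpace ℝ (Fin d) :=
    fun y => if y = x then 0 else gradient W (x - y) with hG
  have hGval : ∀ y, y ≠ x → G y = gradient W (x - y) := fun y hy => if_neg hy
  have hGbound : ∀ y, ‖G y‖ ≤ winf := by
    intro y
    by_cases hy : y = x
    · simp only [hG, if_pos hy, norm_zero]; exact hW.winf_nonneg
    · rw [hGval y hy]
      exact hW.gradBound _ (sub_ne_zero.2 (Ne.symm hy))
  have hGmeas : Measurable G := by
    apply Measurable.ite (by exact measurableSet_eq) measurable_const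
    exact ((InnerProductSpace.toDual ℝ _).symm.continuous.measurable.comp
      (measurable_fderiv ℝ W)).comp (measurable_const.sub measurable_id)
  have hGcont : ∀ y, y ≠ x → ContinuousAt G y := by
    intro y hy
    have hgc : ContinuousAt (fun y' => gradient W (x - y')) y := by
      have h1 : ContinuousAt (gradient W) (x - y) :=
        hW.gradContinuous.continuousAt (isOpen_compl_singleton.mem_nhds
          (sub_ne_zero.2 (Ne.symm hy)))
      exact h1.comp ((continuous_const.sub continuous_id).continuousAt)
    apply hgc.congr
    filter_upwards [isOpen_compl_singleton.mem_nhds (x := y) hy] with y' hy'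
    exact (hGval y' hy').symm
  -- rewrite the target integral
  have hres : ρ.restrict {y : EuclideanSpace ℝ (Fin d) | y ≠ x} = ρ := by
    apply Measure.restrict_eq_self_of_ae_mem
    rw [ae_iff]
    convert hx using 2
    ext y
    simp [Set.mem_setOf_eq, not_not]
  have hsmeas : MeasurableSet {y : EuclideanSpace ℝ (Fin d) | y ≠ x} :=
    (measurableSet_singleton x).compl
  have hI : (∫ y in {y : EuclideanSpace ℝ (Fin d) | y ≠ x}, gradient W (x - y) ∂ρ)
      = ∫ y, G y ∂ρ := by
    rw [show (∫ y in {y : EuclideanSpace ℝ (Fin d) | y ≠ x}, gradient W (x - y) ∂ρ)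
        = ∫ y in {y : EuclideanSpace ℝ (Fin d) | y ≠ x}, G y ∂ρ from
      setIntegral_congr_fun hsmeas fun y hy => (hGval y hy).symm]
    rw [hres]
  rw [hI]
  haveI := hρ
  have hGint : ∀ (μ : Measure (EuclideanSpace ℝ (Fin d))), IsProbabilityMeasure μ →
      Integrable G μ := fun μ hμ => by
    haveI := hμ
    exact vsr_int_bdd μ hGmeas.aestronglyMeasurable hGbound
  -- metric formulation
  rw [Metric.tendsto_nhds]
  intro ε hε
  set ε' : ℝ := ε / (4*winf + 6) with hε'def
  have hwinf := hW.winf_nonneg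
  have hε' : 0 < ε' := div_pos hε (by linarith)
  -- choice of δ
  obtain ⟨δ, hδpos, hδball⟩ : ∃ δ > 0, (ρ (closedBall x (4*δ))).toReal < ε' := by
    have hmono : Antitone (fun k : ℕ => closedBall x (1/((k:ℝ)+1))) := by
      intro a b hab
      apply closedBall_subset_closedBall
      have : (a:ℝ) ≤ (b:ℝ) := by exact_mod_cast hab
      gcongr
    have hinter : ⋂ k : ℕ, closedBall x (1/((k:ℝ)+1)) = {x} := by
      ext y
      simp only [Set.mem_iInter, mem_closedBall, Set.mem_singleton_iff]
      constructor
      · intro hk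
        by_contra hne
        have hpos : 0 < dist y x := dist_pos.2 hne
        obtain ⟨k, hklt⟩ := exists_nat_one_div_lt hpos
        exact absurd (hk k) (not_le.2 hklt)
      · rintro rfl
        intro k
        rw [dist_self]
        positivity
    have htend := tendsto_measure_iInter_atTop (μ := ρ)
      (fun k => measurableSet_closedBall.nullMeasurableSet) hmono ⟨0, measure_ne_top ρ _⟩
    rw [hinter, hx] at htend
    obtain ⟨k, hk⟩ := (htend.eventually_lt_const (show (0:ℝ≥0∞) < ENNReal.ofReal ε' from
      ENNReal.ofReal_pos.2 hε')).exists
    refine ⟨1/((k:ℝ)+1)/4, by positivity, ?_⟩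
    have h44 : 4 * (1/((k:ℝ)+1)/4) = 1/((k:ℝ)+1) := by ring
    rw [h44]
    exact ENNReal.toReal_lt_of_lt_ofReal hk
  have hball2 : (ρ (closedBall x (2*δ))).toReal < ε' := by
    refine lt_of_le_of_lt ?_ hδball
    exact ENNReal.toReal_mono (measure_ne_top ρ _)
      (measure_mono (closedBall_subset_closedBall (by linarith)))
  have hball4 : (ρ (closedBall x (2*(2*δ)))).toReal < ε' := by
    rw [show 2*(2*δ) = 4*δ by ring]
    exact hδball
  -- cutoff and regularized kernel
  set χ : EuclideanSpace ℝ (Fin d) → ℝ := fun y => max 0 (min 1 (dist y x / δ - 1)) with hχ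
  have hχcont : Continuous χ := by
    apply continuous_const.max
    exact continuous_const.min
      (((continuous_id.dist continuous_const).div_const δ).sub continuous_const)
  have hχ0 : ∀ y, 0 ≤ χ y := fun y => le_max_left _ _
  have hχ1 : ∀ y, χ y ≤ 1 := fun y => max_le zero_le_one (min_le_left _ _)
  have hχzero : ∀ y, dist y x < δ → χ y = 0 := by
    intro y hy
    have h2 : dist y x / δ - 1 < 0 := by
      have := (div_lt_one hδpos).2 hy
      linarith
    simp only [hχ]
    rw [min_eq_right (by linarith), max_eq_left (by linarith)]
  have hχone : ∀ y, 2*δ ≤ dist y x → χ y = 1 := by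
    intro y hy
    have h2 : (1:ℝ) ≤ dist y x / δ - 1 := by
      have := (le_div_iff₀ hδpos).2 hy
      linarith
    simp only [hχ, min_eq_left h2]
    exact max_eq_right zero_le_one
  set h : EuclideanSpace ℝ (Fin d) → EuclideanSpace ℝ (Fin d) := fun y => χ y • G y with hh
  have hhval : ∀ y, h y = χ y • G y := fun _ => rfl
  have hhcont : Continuous h := by
    rw [continuous_iff_continuousAt]
    intro y
    by_cases hy : y = x
    · subst hy
      apply ContinuousAt.congr (continuousAt_const (y := (0 : EuclideanSpace ℝ (Fin d))))
      filter_upwards [Metric.ball_mem_nhds y hδpos] with y' hy'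
      rw [hhval, hχzero y' (mem_ball.1 hy'), zero_smul]
    · exact (hχcont.continuousAt).smul (hGcont y hy)
  have hhbound : ∀ y, ‖h y‖ ≤ winf := by
    intro y
    rw [hhval, norm_smul, Real.norm_eq_abs, abs_of_nonneg (hχ0 y)]
    calc χ y * ‖G y‖ ≤ 1 * winf :=
      mul_le_mul (hχ1 y) (hGbound y) (norm_nonneg _) zero_le_one
    _ = winf := one_mul _
  have hGh : ∀ y, ‖G y - h y‖ ≤ 0 + (closedBall x (2*δ)).indicator (fun _ => winf) y := by
    intro y
    rw [zero_add]
    by_cases hy : y ∈ closedBall x (2*δ)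
    · rw [Set.indicator_of_mem hy, hhval,
        show G y - χ y • G y = (1 - χ y) • G y by rw [sub_smul, one_smul],
        norm_smul, Real.norm_eq_abs, abs_of_nonneg (by have := hχ1 y; linarith)]
      calc (1 - χ y) * ‖G y‖ ≤ 1 * winf :=
        mul_le_mul (by have := hχ0 y; linarith) (hGbound y) (norm_nonneg _) zero_le_one
      _ = winf := one_mul _
    · rw [Set.indicator_of_notMem hy]
      rw [mem_closedBall, not_le] at hy
      rw [hhval, hχone y hy.le, one_smul, sub_self, norm_zero]
  have hhint : ∀ (μ : Measure (EuclideanSpace ℝ (Fin d))), IsProbabilityMeasure μ →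
      Integrable h μ := fun μ hμ => by
    haveI := hμ
    exact vsr_int_bdd μ hhcont.aestronglyMeasurable hhbound
  -- eventual bounds
  have hE1 : ∀ᶠ n : ℕ in atTop, 1 ≤ n := eventually_ge_atTop 1
  have h1n : Tendsto (fun n : ℕ => 1/(n:ℝ)) atTop (𝓝 0) := tendsto_one_div_atTop_nhds_zero_nat
  have hE2 : ∀ᶠ n : ℕ in atTop, 1/(n:ℝ) < δ := h1n.eventually_lt_const hδpos
  have hE3 : ∀ᶠ n : ℕ in atTop, 1/(n:ℝ) < ε' := h1n.eventually_lt_const hε'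
  have hE4 := vsr_mass_small ρn ρ hρn hρ hnarrow x hδpos hball2
  have hE5 := vsr_mass_small ρn ρ hρn hρ hnarrow x (by linarith : (0:ℝ) < 2*δ) hball4
  have hE6 : ∀ᶠ n in atTop, dist (∫ y, h y ∂(ρn n)) (∫ y, h y ∂ρ) < ε' :=
    (Metric.tendsto_nhds.1
      (vsr_tendsto_vec_integral ρn ρ hρn hρ hnarrow h hhcont hhbound)) ε' hε'
  filter_upwards [hE1, hE2, hE3, hE4, hE5, hE6] with n hn1 hnδ hnε hm1 hm2 hdist
  haveI := hρn n
  -- integrability of the n-th term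
  have hfcont : Continuous (fun y => gradient (Wn n) (x - y)) := by
    have : Continuous (gradient (Wn n)) :=
      (InnerProductSpace.toDual ℝ _).symm.continuous.comp
        ((hWn n hn1).smooth.continuous_fderiv one_ne_zero)
    exact this.comp (continuous_const.sub continuous_id)
  have hfint : Integrable (fun y => gradient (Wn n) (x - y)) (ρn n) :=
    vsr_int_bdd (ρn n) hfcont.aestronglyMeasurable (fun y => (hWn n hn1).gradBound _)
  -- term 1
  have hT1b : ∀ y, ‖gradient (Wn n) (x - y) - G y‖
      ≤ 1/(n:ℝ) + (closedBall x δ).indicator (fun _ => 2*winf) y := by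
    intro y
    have hn0 : 0 < 1/(n:ℝ) := by
      have : (0:ℝ) < n := by exact_mod_cast hn1
      positivity
    by_cases hfar : 1/(n:ℝ) ≤ ‖x - y‖
    · have hne : x - y ≠ 0 := by
        intro h0
        rw [h0, norm_zero] at hfar
        linarith
      have hyx : y ≠ x := fun hyx => hne (by rw [hyx, sub_self])
      rw [hGval y hyx]
      refine le_add_of_le_of_nonneg (happrox n hn1 _ hfar) ?_
      exact Set.indicator_nonneg (fun _ _ => by linarith) y
    · push_neg at hfar
      have hmem : y ∈ closedBall x δ := by
        rw [mem_closedBall, dist_comm, dist_eq_norm]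
        calc ‖x - y‖ ≤ 1/(n:ℝ) := hfar.le
          _ ≤ δ := hnδ.le
      rw [Set.indicator_of_mem hmem]
      calc ‖gradient (Wn n) (x - y) - G y‖ ≤ ‖gradient (Wn n) (x - y)‖ + ‖G y‖ :=
            norm_sub_le _ _
        _ ≤ winf + winf := add_le_add ((hWn n hn1).gradBound _) (hGbound y)
        _ ≤ 1/(n:ℝ) + 2*winf := by linarith
  have hT1 : ‖(∫ y, gradient (Wn n) (x - y) ∂(ρn n)) - ∫ y, G y ∂(ρn n)‖
      ≤ 1/(n:ℝ) + 2*winf * ((ρn n) (closedBall x δ)).toReal := by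
    rw [← integral_sub hfint (hGint _ (hρn n))]
    exact vsr_int_est (ρn n) (hfint.sub (hGint _ (hρn n))) measurableSet_closedBall hT1b
  have hT2 : ‖(∫ y, G y ∂(ρn n)) - ∫ y, h y ∂(ρn n)‖
      ≤ 0 + winf * ((ρn n) (closedBall x (2*δ))).toReal := by
    rw [← integral_sub (hGint _ (hρn n)) (hhint _ (hρn n))]
    exact vsr_int_est (ρn n) ((hGint _ (hρn n)).sub (hhint _ (hρn n)))
      measurableSet_closedBall hGh
  have hT4 : ‖(∫ y, h y ∂ρ) - ∫ y, G y ∂ρ‖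
      ≤ 0 + winf * (ρ (closedBall x (2*δ))).toReal := by
    rw [← integral_sub (hhint _ hρ) (hGint _ hρ)]
    have hGh' : ∀ y, ‖h y - G y‖ ≤ 0 + (closedBall x (2*δ)).indicator (fun _ => winf) y := by
      intro y
      rw [norm_sub_rev]
      exact hGh y
    exact vsr_int_est ρ ((hhint _ hρ).sub (hGint _ hρ)) measurableSet_closedBall hGh'
  -- combine
  have hchain : dist (∫ y, gradient (Wn n) (x - y) ∂(ρn n)) (∫ y, G y ∂ρ)
      ≤ ‖(∫ y, gradient (Wn n) (x - y) ∂(ρn n)) - ∫ y, G y ∂(ρn n)‖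
        + ‖(∫ y, G y ∂(ρn n)) - ∫ y, h y ∂(ρn n)‖
        + dist (∫ y, h y ∂(ρn n)) (∫ y, h y ∂ρ)
        + ‖(∫ y, h y ∂ρ) - ∫ y, G y ∂ρ‖ := by
    calc dist (∫ y, gradient (Wn n) (x - y) ∂(ρn n)) (∫ y, G y ∂ρ)
        ≤ dist (∫ y, gradient (Wn n) (x - y) ∂(ρn n)) (∫ y, G y ∂(ρn n))
          + dist (∫ y, G y ∂(ρn n)) (∫ y, h y ∂(ρn n))
          + dist (∫ y, h y ∂(ρn n)) (∫ y, G y ∂ρ) := dist_triangle4 _ _ _ _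
      _ ≤ dist (∫ y, gradient (Wn n) (x - y) ∂(ρn n)) (∫ y, G y ∂(ρn n))
          + dist (∫ y, G y ∂(ρn n)) (∫ y, h y ∂(ρn n))
          + (dist (∫ y, h y ∂(ρn n)) (∫ y, h y ∂ρ) + dist (∫ y, h y ∂ρ) (∫ y, G y ∂ρ)) := by
            gcongr
            exact dist_triangle _ _ _
      _ = ‖(∫ y, gradient (Wn n) (x - y) ∂(ρn n)) - ∫ y, G y ∂(ρn n)‖
          + ‖(∫ y, G y ∂(ρn n)) - ∫ y, h y ∂(ρn n)‖
          + dist (∫ y, h y ∂(ρn n)) (∫ y, h y ∂ρ)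
          + ‖(∫ y, h y ∂ρ) - ∫ y, G y ∂ρ‖ := by
            rw [dist_eq_norm, dist_eq_norm, dist_eq_norm (∫ y, h y ∂ρ)]
            ring
  have hmul1 : 2*winf * ((ρn n) (closedBall x δ)).toReal ≤ 2*winf * ε' :=
    mul_le_mul_of_nonneg_left hm1.le (by linarith)
  have hmul2 : winf * ((ρn n) (closedBall x (2*δ))).toReal ≤ winf * ε' :=
    mul_le_mul_of_nonneg_left hm2.le hwinf
  have hmul3 : winf * (ρ (closedBall x (2*δ))).toReal ≤ winf * ε' :=
    mul_le_mul_of_nonneg_left hball2.le hwinf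
  have hεeq : ε' * (4*winf + 6) = ε := div_mul_cancel₀ ε (by linarith)
  calc dist (∫ y, gradient (Wn n) (x - y) ∂(ρn n)) (∫ y, G y ∂ρ)
      ≤ ‖(∫ y, gradient (Wn n) (x - y) ∂(ρn n)) - ∫ y, G y ∂(ρn n)‖
        + ‖(∫ y, G y ∂(ρn n)) - ∫ y, h y ∂(ρn n)‖
        + dist (∫ y, h y ∂(ρn n)) (∫ y, h y ∂ρ)
        + ‖(∫ y, h y ∂ρ) - ∫ y, G y ∂ρ‖ := hchain
    _ < ε := by
        have := hT1; have := hT2; have := hT4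
        nlinarith [hdist, hnε, hmul1, hmul2, hmul3, hε'.le]
end
end

section
/- Let W_ε ∈ C¹(ℝ^d) be even (W_ε(−x) = W_ε(x)), λ-convex for some λ ≤ 0, and with |∇W_ε| bounded. Let T > 0, let ρ₀, ρ̃₀ ∈ 𝒫₂(ℝ^d), and let γ₀ be a Borel probability measure on ℝ^d × ℝ^d with marginals ρ₀ and ρ̃₀. Let X, X̃ : [0,T] × ℝ^d → ℝ^d be measurable maps, continuous in t, with X(0,x) = x and X̃(0,x) = x for all x, sup_{t∈[0,T]} ∫ |X(t,x)|² ρ₀(dx) < ∞ and sup_{t∈[0,T]} ∫ |X̃(t,x)|² ρ̃₀(dx) < ∞, and such that for every x, t ↦ X(t,x) is differentiable with ∂_t X(t,x) = −∫_{ℝ^d} ∇W_ε(X(t,x) − X(t,y)) ρ₀(dy) for all t, and t ↦ X̃(t,x) is differentiable with ∂_t X̃(t,x) = −∫_{ℝ^d} ∇W_ε(X̃(t,x) − X̃(t,y)) ρ̃₀(dy) for all t. Then the quantity I(t) = ∬_{ℝ^d×ℝ^d} |X(t,x₁) − X̃(t,x₂)|² γ₀(dx₁,dx₂) satisfies I(t)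 ≤ e^{−4λt} I(0) for all t ∈ [0,T]. -/
open MeasureTheory Filter Metric
open scoped RealInnerProductSpace Topology BigOperators NNReal ENNReal Classical

noncomputable section

/-- `μ ∈ 𝒫₂(ℝ^d)`: a Borel probability measure with finite second moment. -/
def MemP2 {d : ℕ} (μ : Measure (EuclideanSpace ℝ (Fin d))) : Prop :=
  IsProbabilityMeasure μ ∧ Integrable (fun x => ‖x‖ ^ 2) μ

variable {F : Type*} [NormedAddCommGroup F] [InnerProductSpace ℝ F] [CompleteSpace F]

lemma aux_grad_mul_normsq (c : ℝ) (x : F) :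
    HasGradientAt (fun y : F => c * ‖y‖ ^ 2) ((2 * c) • x) x := by
  rw [hasGradientAt_iff_hasFDerivAt]
  have h1 : HasFDerivAt (fun y : F => ⟪y, y⟫)
      ((fderivInnerCLM ℝ (x, x)).comp ((ContinuousLinearMap.id ℝ F).prod
        (ContinuousLinearMap.id ℝ F))) x :=
    (hasFDerivAt_id x).inner ℝ (hasFDerivAt_id x)
  have h2 : HasFDerivAt (fun y : F => c * ‖y‖ ^ 2)
      (c • ((fderivInnerCLM ℝ (x, x)).comp ((ContinuousLinearMap.id ℝ F).prod
        (ContinuousLinearMap.id ℝ F)))) x := by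
    have := h1.const_mul c
    simpa only [real_inner_self_eq_norm_sq] using this
  refine h2.congr_fderiv ?_
  ext v
  simp [real_inner_smul_left, fderivInnerCLM_apply, real_inner_comm x v]
  ring

lemma aux_firstorder {g : F → ℝ} (hg : ConvexOn ℝ Set.univ g) {a b ga : F}
    (hga : HasGradientAt g ga a) : ⟪ga, b - a⟫ ≤ g b - g a := by
  have hφconv : ConvexOn ℝ Set.univ (g ∘ (AffineMap.lineMap a b : ℝ →ᵃ[ℝ] F)) := by
    simpa using hg.comp_affineMap (AffineMap.lineMap a b)
  have hcurve : HasDerivAt (fun t : ℝ => ((AffineMap.lineMap a b : ℝ →ᵃ[ℝ] F) t)) (b - a) 0 := by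
    simp only [AffineMap.lineMap_apply_module]
    have h1 : HasDerivAt (fun t : ℝ => (1 - t) • a) (-a) 0 := by
      simpa using (((hasDerivAt_id (0:ℝ)).const_sub 1).smul_const a)
    have h2 : HasDerivAt (fun t : ℝ => t • b) b 0 := by
      simpa using ((hasDerivAt_id (0:ℝ)).smul_const b)
    have h := h1.add h2
    rw [neg_add_eq_sub] at h
    exact h
  have hga' : HasFDerivAt g ((InnerProductSpace.toDual ℝ F) ga)
      ((AffineMap.lineMap a b : ℝ →ᵃ[ℝ] F) 0) := by
    simpa using hga.hasFDerivAt
  have hderiv : HasDerivAt (g ∘ (AffineMap.lineMap a b : ℝ →ᵃ[ℝ] F)) ⟪ga, b - a⟫ 0 := by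
    simpa [InnerProductSpace.toDual_apply_apply] using hga'.comp_hasDerivAt 0 hcurve
  have hslope := hφconv.le_slope_of_hasDerivAt (Set.mem_univ (0:ℝ)) (Set.mem_univ (1:ℝ))
    zero_lt_one hderiv
  have heq : slope (g ∘ (AffineMap.lineMap a b : ℝ →ᵃ[ℝ] F)) 0 1 = g b - g a := by
    simp [slope_def_field, Function.comp, AffineMap.lineMap_apply_module]
  rw [heq] at hslope
  exact hslope

lemma aux_grad_lamconvex {W : F → ℝ} {lam : ℝ} (hW : Differentiable ℝ W)
    (hconv : ConvexOn ℝ Set.univ fun x => W x - lam / 2 * ‖x‖ ^ 2) (u v : F) :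
    lam * ‖u - v‖ ^ 2 ≤ ⟪gradient W u - gradient W v, u - v⟫ := by
  have hg : ∀ x : F, HasGradientAt (fun y => W y - lam / 2 * ‖y‖ ^ 2)
      (gradient W x - lam • x) x := by
    intro x
    have hq : HasGradientAt (fun y : F => lam / 2 * ‖y‖ ^ 2) (lam • x) x := by
      have := aux_grad_mul_normsq (lam / 2) x
      convert this using 2
      ring
    rw [hasGradientAt_iff_hasFDerivAt, map_sub]
    exact ((hW x).hasGradientAt.hasFDerivAt).sub hq.hasFDerivAt
  have h1 := aux_firstorder hconv (hg u) (b := v)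
  have h2 := aux_firstorder hconv (hg v) (b := u)
  have key : ⟪gradient W u - lam • u, v - u⟫ + ⟪gradient W v - lam • v, u - v⟫ ≤ 0 := by
    linarith
  have c1 : ⟪u, v⟫ = ⟪v, u⟫ := real_inner_comm _ _
  have hn : ‖u - v‖ ^ 2 = ⟪u, u⟫ - ⟪u, v⟫ - ⟪v, u⟫ + ⟪v, v⟫ := by
    rw [← real_inner_self_eq_norm_sq]
    simp [inner_sub_left, inner_sub_right]
    rw [norm_sub_sq_real, ← c1]
    ring
  simp only [inner_sub_left, inner_sub_right, real_inner_smul_left] at key ⊢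
  rw [hn]
  linarith

lemma aux_grad_odd {W : F → ℝ} (hW : Differentiable ℝ W) (heven : ∀ x, W (-x) = W x) (x : F) :
    gradient W (-x) = - gradient W x := by
  have hneg : HasFDerivAt (fun y : F => -y) (-(ContinuousLinearMap.id ℝ F)) x := by
    exact (hasFDerivAt_id x).neg
  have h1 : HasFDerivAt W (((InnerProductSpace.toDual ℝ F) (gradient W (-x))).comp
      (-(ContinuousLinearMap.id ℝ F))) x := by
    have h := ((hW (-x)).hasGradientAt.hasFDerivAt).comp x hneg
    have hfun : (W ∘ fun y : F => -y) = W := funext fun y => heven y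
    rwa [hfun] at h
  have h2 := (hW x).hasGradientAt.hasFDerivAt
  have h3 := h1.unique h2
  have h4 : ∀ v : F, ⟪-(gradient W (-x)), v⟫ = ⟪gradient W x, v⟫ := by
    intro v
    have := DFunLike.congr_fun h3 v
    simpa [InnerProductSpace.toDual_apply_apply, inner_neg_left, inner_neg_right] using this
  have h5 : -(gradient W (-x)) = gradient W x := ext_inner_right ℝ h4
  rw [← h5, neg_neg]

end

noncomputable section
open MeasureTheory Filter Metric
variable {d : ℕ}

set_option maxHeartbeats 1000000 in
theorem coupled_characteristics_contraction'
    {d : ℕ} (Wε : EuclideanSpace ℝ (Fin d) → ℝ) (lam : ℝ) (hlam : lam ≤ 0)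
    (hsmooth : ContDiff ℝ 1 Wε) (heven : ∀ x, Wε (-x) = Wε x)
    (hconv : ConvexOn ℝ Set.univ fun x => Wε x - lam / 2 * ‖x‖ ^ 2)
    (hbound : ∃ C : ℝ, ∀ x, ‖gradient Wε x‖ ≤ C)
    (T : ℝ) (hT : 0 < T)
    (ρ₀ σ₀ : Measure (EuclideanSpace ℝ (Fin d)))
    (hρ₀ : IsProbabilityMeasure ρ₀ ∧ Integrable (fun x => ‖x‖ ^ 2) ρ₀)
    (hσ₀ : IsProbabilityMeasure σ₀ ∧ Integrable (fun x => ‖x‖ ^ 2) σ₀)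
    (γ₀ : Measure (EuclideanSpace ℝ (Fin d) × EuclideanSpace ℝ (Fin d)))
    (hγ₀ : IsProbabilityMeasure γ₀)
    (hγ₀₁ : γ₀.map Prod.fst = ρ₀) (hγ₀₂ : γ₀.map Prod.snd = σ₀)
    (X Y : ℝ → EuclideanSpace ℝ (Fin d) → EuclideanSpace ℝ (Fin d))
    (hXmeas : Measurable fun p : ℝ × EuclideanSpace ℝ (Fin d) => X p.1 p.2)
    (hYmeas : Measurable fun p : ℝ × EuclideanSpace ℝ (Fin d) => Y p.1 p.2)
    (hXcont : ∀ x, ContinuousOn (fun t => X t x) (Set.Icc 0 T))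
    (hYcont : ∀ x, ContinuousOn (fun t => Y t x) (Set.Icc 0 T))
    (hX0 : ∀ x, X 0 x = x) (hY0 : ∀ x, Y 0 x = x)
    (hXode : ∀ x, ∀ t ∈ Set.Icc (0 : ℝ) T,
      HasDerivAt (fun s => X s x) (-∫ y, gradient Wε (X t x - X t y) ∂ρ₀) t)
    (hYode : ∀ x, ∀ t ∈ Set.Icc (0 : ℝ) T,
      HasDerivAt (fun s => Y s x) (-∫ y, gradient Wε (Y t x - Y t y) ∂σ₀) t) :
    ∀ t ∈ Set.Icc (0 : ℝ) T,
      (∫ p, ‖X t p.1 - Y t p.2‖ ^ 2 ∂γ₀) ≤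
        Real.exp (-4 * lam * t) * ∫ p, ‖X 0 p.1 - Y 0 p.2‖ ^ 2 ∂γ₀ := by
  classical
  obtain ⟨C, hC⟩ := hbound
  have hC0 : (0:ℝ) ≤ C := le_trans (norm_nonneg _) (hC 0)
  haveI hρP : IsProbabilityMeasure ρ₀ := hρ₀.1
  haveI hσP : IsProbabilityMeasure σ₀ := hσ₀.1
  have hWdiff : Differentiable ℝ Wε := hsmooth.differentiable one_ne_zero
  have hgradcont : Continuous (gradient Wε) := by
    have h := hsmooth.continuous_fderiv one_ne_zero
    exact ((InnerProductSpace.toDual ℝ _).symm.continuous.comp h : _)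
  have hgradodd : ∀ z, gradient Wε (-z) = - gradient Wε z := aux_grad_odd hWdiff heven
  have hmono : ∀ u v, lam * ‖u - v‖ ^ 2 ≤ ⟪gradient Wε u - gradient Wε v, u - v⟫ :=
    aux_grad_lamconvex hWdiff hconv
  have mX : ∀ s, Measurable (X s) := fun s =>
    hXmeas.comp (measurable_const.prodMk measurable_id)
  have mY : ∀ s, Measurable (Y s) := fun s =>
    hYmeas.comp (measurable_const.prodMk measurable_id)
  -- velocity fields
  obtain ⟨vX, hvX⟩ : ∃ v : ℝ → EuclideanSpace ℝ (Fin d) → EuclideanSpace ℝ (Fin d),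
      ∀ s x, v s x = -∫ y, gradient Wε (X s x - X s y) ∂ρ₀ := ⟨_, fun _ _ => rfl⟩
  obtain ⟨vY, hvY⟩ : ∃ v : ℝ → EuclideanSpace ℝ (Fin d) → EuclideanSpace ℝ (Fin d),
      ∀ s x, v s x = -∫ y, gradient Wε (Y s x - Y s y) ∂σ₀ := ⟨_, fun _ _ => rfl⟩
  have hvXb : ∀ s x, ‖vX s x‖ ≤ C := by
    intro s x
    rw [hvX, norm_neg]
    calc ‖∫ y, gradient Wε (X s x - X s y) ∂ρ₀‖ ≤ C * (ρ₀ Set.univ).toReal :=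
          norm_integral_le_of_norm_le_const (Eventually.of_forall fun y => hC _)
      _ = C := by simp
  have hvYb : ∀ s x, ‖vY s x‖ ≤ C := by
    intro s x
    rw [hvY, norm_neg]
    calc ‖∫ y, gradient Wε (Y s x - Y s y) ∂σ₀‖ ≤ C * (σ₀ Set.univ).toReal :=
          norm_integral_le_of_norm_le_const (Eventually.of_forall fun y => hC _)
      _ = C := by simp
  have hXode' : ∀ x, ∀ s ∈ Set.Icc (0:ℝ) T, HasDerivAt (fun r => X r x) (vX s x) s := by
    intro x s hs; rw [hvX]; exact hXode x s hs
  have hYode' : ∀ x, ∀ s ∈ Set.Icc (0:ℝ) T, HasDerivAt (fun r => Y r x) (vY s x) s := by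
    intro x s hs; rw [hvY]; exact hYode x s hs
  -- growth bounds
  have hXgrow : ∀ x, ∀ s ∈ Set.Icc (0:ℝ) T, ‖X s x‖ ≤ ‖x‖ + C * T := by
    intro x s hs
    have h0 : ∀ u ∈ Set.Icc (0:ℝ) s, HasDerivWithinAt (fun r => X r x) (vX u x)
        (Set.Icc 0 s) u := fun u hu =>
      (hXode' x u ⟨hu.1, le_trans hu.2 hs.2⟩).hasDerivWithinAt
    have hb := norm_image_sub_le_of_norm_deriv_le_segment' h0
      (fun u _ => hvXb u x) s ⟨hs.1, le_rfl⟩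
    rw [hX0] at hb
    have h1 : ‖X s x‖ ≤ ‖X s x - x‖ + ‖x‖ := by
      simpa using norm_add_le (X s x - x) x
    have h2 : C * (s - 0) ≤ C * T := by
      have := hs.2; nlinarith
    linarith
  have hYgrow : ∀ x, ∀ s ∈ Set.Icc (0:ℝ) T, ‖Y s x‖ ≤ ‖x‖ + C * T := by
    intro x s hs
    have h0 : ∀ u ∈ Set.Icc (0:ℝ) s, HasDerivWithinAt (fun r => Y r x) (vY u x)
        (Set.Icc 0 s) u := fun u hu =>
      (hYode' x u ⟨hu.1, le_trans hu.2 hs.2⟩).hasDerivWithinAt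
    have hb := norm_image_sub_le_of_norm_deriv_le_segment' h0
      (fun u _ => hvYb u x) s ⟨hs.1, le_rfl⟩
    rw [hY0] at hb
    have h1 : ‖Y s x‖ ≤ ‖Y s x - x‖ + ‖x‖ := by
      simpa using norm_add_le (Y s x - x) x
    have h2 : C * (s - 0) ≤ C * T := by
      have := hs.2; nlinarith
    linarith
  -- the pointwise bound function
  obtain ⟨b0, hb0⟩ : ∃ b : EuclideanSpace ℝ (Fin d) × EuclideanSpace ℝ (Fin d) → ℝ,
      ∀ p, b p = ‖p.1‖ + ‖p.2‖ + 2 * (C * T) := ⟨_, fun _ => rfl⟩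
  have hb0nn : ∀ p, 0 ≤ b0 p := by
    intro p; rw [hb0]; positivity
  have hZb : ∀ s ∈ Set.Icc (0:ℝ) T, ∀ p : EuclideanSpace ℝ (Fin d) × EuclideanSpace ℝ (Fin d),
      ‖X s p.1 - Y s p.2‖ ≤ b0 p := by
    intro s hs p
    have h1 := hXgrow p.1 s hs
    have h2 := hYgrow p.2 s hs
    have h3 := norm_sub_le (X s p.1) (Y s p.2)
    rw [hb0]; linarith
  -- integrability on γ₀
  have hint1 : Integrable (fun p : EuclideanSpace ℝ (Fin d) × EuclideanSpace ℝ (Fin d) =>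
      ‖p.1‖ ^ 2) γ₀ := by
    have h := hρ₀.2
    rw [← hγ₀₁] at h
    exact (integrable_map_measure (by exact (continuous_norm.pow 2).aestronglyMeasurable)
      measurable_fst.aemeasurable).mp h
  have hint2 : Integrable (fun p : EuclideanSpace ℝ (Fin d) × EuclideanSpace ℝ (Fin d) =>
      ‖p.2‖ ^ 2) γ₀ := by
    have h := hσ₀.2
    rw [← hγ₀₂] at h
    exact (integrable_map_measure (by exact (continuous_norm.pow 2).aestronglyMeasurable)
      measurable_snd.aemeasurable).mp h
  have hn1 : Integrable (fun p : EuclideanSpace ℝ (Fin d) × EuclideanSpace ℝ (Fin d) =>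
      ‖p.1‖) γ₀ := by
    refine Integrable.mono' ((integrable_const (1:ℝ)).add hint1)
      (by exact continuous_fst.norm.aestronglyMeasurable) (Eventually.of_forall fun p => ?_)
    rw [Real.norm_eq_abs, abs_of_nonneg (norm_nonneg _)]
    simp only [Pi.add_apply]
    nlinarith [norm_nonneg p.1, sq_nonneg (‖p.1‖ - 1)]
  have hn2 : Integrable (fun p : EuclideanSpace ℝ (Fin d) × EuclideanSpace ℝ (Fin d) =>
      ‖p.2‖) γ₀ := by
    refine Integrable.mono' ((integrable_const (1:ℝ)).add hint2)
      (by exact continuous_snd.norm.aestronglyMeasurable) (Eventually.of_forall fun p => ?_)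
    rw [Real.norm_eq_abs, abs_of_nonneg (norm_nonneg _)]
    simp only [Pi.add_apply]
    nlinarith [norm_nonneg p.2, sq_nonneg (‖p.2‖ - 1)]
  have hb0meas : Continuous b0 := by
    have : b0 = fun p : EuclideanSpace ℝ (Fin d) × EuclideanSpace ℝ (Fin d) =>
        ‖p.1‖ + ‖p.2‖ + 2 * (C * T) := funext hb0
    rw [this]; continuity
  have hb0int : Integrable b0 γ₀ := by
    have : Integrable (fun p : EuclideanSpace ℝ (Fin d) × EuclideanSpace ℝ (Fin d) =>
        ‖p.1‖ + ‖p.2‖ + 2 * (C * T)) γ₀ := (hn1.add hn2).add (integrable_const _)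
    exact this.congr (Eventually.of_forall fun p => (hb0 p).symm)
  have hb0sqint : Integrable (fun p => (b0 p) ^ 2) γ₀ := by
    refine Integrable.mono' (((hint1.add hint2).add (integrable_const ((2*(C*T))^2))).const_mul 3)
      ((hb0meas.pow 2).aestronglyMeasurable) (Eventually.of_forall fun p => ?_)
    rw [Real.norm_eq_abs, abs_of_nonneg (sq_nonneg _), hb0]
    simp only [Pi.add_apply]
    nlinarith [sq_nonneg (‖p.1‖ - ‖p.2‖), sq_nonneg (‖p.1‖ - 2*(C*T)), sq_nonneg (‖p.2‖ - 2*(C*T))]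
  -- measurability
  haveI : SFinite ρ₀ := inferInstance
  have mvX : ∀ s, Measurable (vX s) := by
    intro s
    have hjoint : StronglyMeasurable fun q : EuclideanSpace ℝ (Fin d) × EuclideanSpace ℝ (Fin d) =>
        gradient Wε (X s q.1 - X s q.2) :=
      (hgradcont.measurable.comp (((mX s).comp measurable_fst).sub
        ((mX s).comp measurable_snd))).stronglyMeasurable
    have h := hjoint.integral_prod_right' (ν := ρ₀)
    have : Measurable fun x => ∫ y, gradient Wε (X s x - X s y) ∂ρ₀ := h.measurable
    have h2 := this.neg
    have heq : vX s = fun x => -∫ y, gradient Wε (X s x - X s y) ∂ρ₀ := funext fun x => hvX s x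
    exact heq ▸ h2
  have mvY : ∀ s, Measurable (vY s) := by
    intro s
    have hjoint : StronglyMeasurable fun q : EuclideanSpace ℝ (Fin d) × EuclideanSpace ℝ (Fin d) =>
        gradient Wε (Y s q.1 - Y s q.2) :=
      (hgradcont.measurable.comp (((mY s).comp measurable_fst).sub
        ((mY s).comp measurable_snd))).stronglyMeasurable
    have h := hjoint.integral_prod_right' (ν := σ₀)
    have : Measurable fun x => ∫ y, gradient Wε (Y s x - Y s y) ∂σ₀ := h.measurable
    have h2 := this.neg
    have heq : vY s = fun x => -∫ y, gradient Wε (Y s x - Y s y) ∂σ₀ := funext fun x => hvY s x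
    exact heq ▸ h2
  have mZ : ∀ s, Measurable fun p : EuclideanSpace ℝ (Fin d) × EuclideanSpace ℝ (Fin d) =>
      X s p.1 - Y s p.2 := fun s => ((mX s).comp measurable_fst).sub ((mY s).comp measurable_snd)
  have mF : ∀ s, AEStronglyMeasurable (fun p : EuclideanSpace ℝ (Fin d) × EuclideanSpace ℝ (Fin d)
      => ‖X s p.1 - Y s p.2‖ ^ 2) γ₀ := fun s =>
    (((mZ s).norm).pow measurable_const).aestronglyMeasurable
  have mF' : ∀ s, AEStronglyMeasurable (fun p : EuclideanSpace ℝ (Fin d) × EuclideanSpace ℝ (Fin d)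
      => 2 * ⟪X s p.1 - Y s p.2, vX s p.1 - vY s p.2⟫) γ₀ := by
    intro s
    have hw : Measurable fun p : EuclideanSpace ℝ (Fin d) × EuclideanSpace ℝ (Fin d) =>
        vX s p.1 - vY s p.2 := ((mvX s).comp measurable_fst).sub ((mvY s).comp measurable_snd)
    exact ((measurable_const.mul ((mZ s).inner hw))).aestronglyMeasurable
  -- integrability of the integrand
  have hIint : ∀ s ∈ Set.Icc (0:ℝ) T,
      Integrable (fun p => ‖X s p.1 - Y s p.2‖ ^ 2) γ₀ := by
    intro s hs
    refine Integrable.mono' hb0sqint (mF s) (Eventually.of_forall fun p => ?_)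
    rw [Real.norm_eq_abs, abs_of_nonneg (sq_nonneg _)]
    have := hZb s hs p
    have h2 := norm_nonneg (X s p.1 - Y s p.2)
    nlinarith
  set I : ℝ → ℝ := fun s => ∫ p, ‖X s p.1 - Y s p.2‖ ^ 2 ∂γ₀ with hIdef
  have hIcont : ContinuousOn I (Set.Icc 0 T) := by
    refine continuousOn_of_dominated (fun s hs => mF s) (fun s hs =>
      Eventually.of_forall fun p => ?_) hb0sqint (Eventually.of_forall fun p => ?_)
    · rw [Real.norm_eq_abs, abs_of_nonneg (sq_nonneg _)]
      have := hZb s hs p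
      have h2 := norm_nonneg (X s p.1 - Y s p.2)
      nlinarith
    · exact (((hXcont p.1).sub (hYcont p.2)).norm.pow 2)
  -- derivative of I on the interior
  have hIderiv : ∀ s ∈ Set.Ioo (0:ℝ) T,
      HasDerivAt I (∫ p, 2 * ⟪X s p.1 - Y s p.2, vX s p.1 - vY s p.2⟫ ∂γ₀) s := by
    intro s hs
    have hε0 : 0 < min s (T - s) := lt_min hs.1 (sub_pos.mpr hs.2)
    have hball : Metric.ball s (min s (T - s)) ⊆ Set.Icc 0 T := by
      intro u hu
      rw [Metric.mem_ball, Real.dist_eq, abs_lt] at hu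
      have h1 : min s (T-s) ≤ s := min_le_left _ _
      have h2 : min s (T-s) ≤ T - s := min_le_right _ _
      constructor <;> [linarith [hu.1]; linarith [hu.2]]
    have hbnd : ∀ p : EuclideanSpace ℝ (Fin d) × EuclideanSpace ℝ (Fin d),
        ∀ r ∈ Metric.ball s (min s (T - s)),
        ‖2 * ⟪X r p.1 - Y r p.2, vX r p.1 - vY r p.2⟫‖ ≤ 4 * C * b0 p := by
      intro p r hr
      have hrI := hball hr
      have h1 : ‖vX r p.1 - vY r p.2‖ ≤ 2 * C := by
        calc ‖vX r p.1 - vY r p.2‖ ≤ ‖vX r p.1‖ + ‖vY r p.2‖ := norm_sub_le _ _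
          _ ≤ C + C := add_le_add (hvXb _ _) (hvYb _ _)
          _ = 2 * C := by ring
      have h3 := hZb r hrI p
      have h4 := abs_real_inner_le_norm (X r p.1 - Y r p.2) (vX r p.1 - vY r p.2)
      have h5 : ‖X r p.1 - Y r p.2‖ * ‖vX r p.1 - vY r p.2‖ ≤ b0 p * (2 * C) :=
        mul_le_mul h3 h1 (norm_nonneg _) (hb0nn p)
      rw [Real.norm_eq_abs, abs_mul, abs_two]
      linarith
    have hdiff : ∀ p : EuclideanSpace ℝ (Fin d) × EuclideanSpace ℝ (Fin d),
        ∀ r ∈ Metric.ball s (min s (T - s)),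
        HasDerivAt (fun t => ‖X t p.1 - Y t p.2‖ ^ 2)
          (2 * ⟪X r p.1 - Y r p.2, vX r p.1 - vY r p.2⟫) r := by
      intro p r hr
      have hrI := hball hr
      have hZd := (hXode' p.1 r hrI).sub (hYode' p.2 r hrI)
      have h := hZd.inner ℝ hZd
      simp only [Pi.sub_apply] at h
      have heq : (fun t => ⟪X t p.1 - Y t p.2, X t p.1 - Y t p.2⟫) =
          fun t => ‖X t p.1 - Y t p.2‖ ^ 2 := funext fun t => real_inner_self_eq_norm_sq _
      have hval : ⟪X r p.1 - Y r p.2, vX r p.1 - vY r p.2⟫ +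
          ⟪vX r p.1 - vY r p.2, X r p.1 - Y r p.2⟫ =
          2 * ⟪X r p.1 - Y r p.2, vX r p.1 - vY r p.2⟫ := by
        rw [real_inner_comm (vX r p.1 - vY r p.2)]; ring
      rw [heq, hval] at h
      exact h
    exact (hasDerivAt_integral_of_dominated_loc_of_deriv_le (Metric.ball_mem_nhds s hε0)
      (Eventually.of_forall mF) (hIint s (hball (Metric.mem_ball_self hε0))) (mF' s)
      (Eventually.of_forall hbnd) (hb0int.const_mul (4 * C))
      (Eventually.of_forall hdiff)).2
  -- the key differential inequality
  have hkey : ∀ s ∈ Set.Icc (0:ℝ) T,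
      (∫ p, 2 * ⟪X s p.1 - Y s p.2, vX s p.1 - vY s p.2⟫ ∂γ₀) ≤ -4 * lam * I s := by
    intro s hs
    -- integrability of gradient integrands in the second variable
    have hGint1 : ∀ p : EuclideanSpace ℝ (Fin d) × EuclideanSpace ℝ (Fin d),
        Integrable (fun q : EuclideanSpace ℝ (Fin d) × EuclideanSpace ℝ (Fin d) =>
          gradient Wε (X s p.1 - X s q.1)) γ₀ := by
      intro p
      refine Integrable.mono' (integrable_const C)
        ((hgradcont.measurable.comp (measurable_const.sub
          ((mX s).comp measurable_fst))).aestronglyMeasurable)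
        (Eventually.of_forall fun q => hC _)
    have hGint2 : ∀ p : EuclideanSpace ℝ (Fin d) × EuclideanSpace ℝ (Fin d),
        Integrable (fun q : EuclideanSpace ℝ (Fin d) × EuclideanSpace ℝ (Fin d) =>
          gradient Wε (Y s p.2 - Y s q.2)) γ₀ := by
      intro p
      refine Integrable.mono' (integrable_const C)
        ((hgradcont.measurable.comp (measurable_const.sub
          ((mY s).comp measurable_snd))).aestronglyMeasurable)
        (Eventually.of_forall fun q => hC _)
    -- representation of the velocities through the coupling
    have hrepX : ∀ x, vX s x = -∫ q, gradient Wε (X s x - X s q.1) ∂γ₀ := by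
      intro x
      rw [hvX, ← hγ₀₁, integral_map measurable_fst.aemeasurable
        (by exact (hgradcont.measurable.comp (measurable_const.sub (mX s))).aestronglyMeasurable)]
    have hrepY : ∀ x, vY s x = -∫ q, gradient Wε (Y s x - Y s q.2) ∂γ₀ := by
      intro x
      rw [hvY, ← hγ₀₂, integral_map measurable_snd.aemeasurable
        (by exact (hgradcont.measurable.comp (measurable_const.sub (mY s))).aestronglyMeasurable)]
    -- the inner integrand
    have hFrep : ∀ p : EuclideanSpace ℝ (Fin d) × EuclideanSpace ℝ (Fin d),
        2 * ⟪X s p.1 - Y s p.2, vX s p.1 - vY s p.2⟫ =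
        ∫ q, -2 * ⟪X s p.1 - Y s p.2,
          gradient Wε (X s p.1 - X s q.1) - gradient Wε (Y s p.2 - Y s q.2)⟫ ∂γ₀ := by
      intro p
      rw [hrepX, hrepY]
      have hsub : (-∫ q, gradient Wε (X s p.1 - X s q.1) ∂γ₀) -
          (-∫ q, gradient Wε (Y s p.2 - Y s q.2) ∂γ₀) =
          -∫ q, (gradient Wε (X s p.1 - X s q.1) - gradient Wε (Y s p.2 - Y s q.2)) ∂γ₀ := by
        rw [integral_sub (hGint1 p) (hGint2 p)]; abel
      have hGint12 : Integrable (fun q : EuclideanSpace ℝ (Fin d) × EuclideanSpace ℝ (Fin d) =>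
          gradient Wε (X s p.1 - X s q.1) - gradient Wε (Y s p.2 - Y s q.2)) γ₀ :=
        (hGint1 p).sub (hGint2 p)
      rw [hsub, inner_neg_right, ← integral_inner hGint12, mul_neg, ← neg_mul,
        ← integral_const_mul]
    rw [integral_congr_ae (Eventually.of_forall hFrep)]
    -- move to the product measure
    set μ2 := γ₀.prod γ₀ with hμ2
    haveI : IsProbabilityMeasure μ2 := by rw [hμ2]; infer_instance
    have hmapfst : μ2.map Prod.fst = γ₀ := by
      rw [hμ2, Measure.map_fst_prod]; simp
    have hmapsnd : μ2.map Prod.snd = γ₀ := by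
      rw [hμ2, Measure.map_snd_prod]; simp
    obtain ⟨H, hH⟩ : ∃ H : ((EuclideanSpace ℝ (Fin d) × EuclideanSpace ℝ (Fin d)) ×
        (EuclideanSpace ℝ (Fin d) × EuclideanSpace ℝ (Fin d))) → ℝ, ∀ r, H r =
        -2 * ⟪X s r.1.1 - Y s r.1.2,
          gradient Wε (X s r.1.1 - X s r.2.1) - gradient Wε (Y s r.1.2 - Y s r.2.2)⟫ :=
      ⟨_, fun _ => rfl⟩
    have mH : AEStronglyMeasurable H μ2 := by
      have : Measurable H := by
        have h1 : Measurable fun r : (EuclideanSpace ℝ (Fin d) × EuclideanSpace ℝ (Fin d)) ×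
            (EuclideanSpace ℝ (Fin d) × EuclideanSpace ℝ (Fin d)) => X s r.1.1 - Y s r.1.2 :=
          ((mX s).comp (measurable_fst.comp measurable_fst)).sub
            ((mY s).comp (measurable_snd.comp measurable_fst))
        have h2 : Measurable fun r : (EuclideanSpace ℝ (Fin d) × EuclideanSpace ℝ (Fin d)) ×
            (EuclideanSpace ℝ (Fin d) × EuclideanSpace ℝ (Fin d)) =>
            gradient Wε (X s r.1.1 - X s r.2.1) - gradient Wε (Y s r.1.2 - Y s r.2.2) :=
          (hgradcont.measurable.comp (((mX s).comp (measurable_fst.comp measurable_fst)).sub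
            ((mX s).comp (measurable_fst.comp measurable_snd)))).sub
          (hgradcont.measurable.comp (((mY s).comp (measurable_snd.comp measurable_fst)).sub
            ((mY s).comp (measurable_snd.comp measurable_snd))))
        have := (measurable_const.mul (h1.inner h2) :
          Measurable fun r : (EuclideanSpace ℝ (Fin d) × EuclideanSpace ℝ (Fin d)) ×
            (EuclideanSpace ℝ (Fin d) × EuclideanSpace ℝ (Fin d)) =>
            (-2 : ℝ) * ⟪X s r.1.1 - Y s r.1.2,
              gradient Wε (X s r.1.1 - X s r.2.1) - gradient Wε (Y s r.1.2 - Y s r.2.2)⟫)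
        exact (funext hH : H = _) ▸ this
      exact this.aestronglyMeasurable
    have hb0fst : Integrable (fun r : (EuclideanSpace ℝ (Fin d) × EuclideanSpace ℝ (Fin d)) ×
        (EuclideanSpace ℝ (Fin d) × EuclideanSpace ℝ (Fin d)) => b0 r.1) μ2 := by
      have h := hb0int
      rw [← hmapfst] at h
      exact (integrable_map_measure hb0meas.aestronglyMeasurable
        measurable_fst.aemeasurable).mp h
    have hHb : ∀ r, ‖H r‖ ≤ 4 * C * b0 r.1 := by
      intro r
      rw [hH]
      have h1 : ‖gradient Wε (X s r.1.1 - X s r.2.1) - gradient Wε (Y s r.1.2 - Y s r.2.2)‖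
          ≤ 2 * C := by
        calc ‖gradient Wε (X s r.1.1 - X s r.2.1) - gradient Wε (Y s r.1.2 - Y s r.2.2)‖
            ≤ ‖gradient Wε (X s r.1.1 - X s r.2.1)‖ + ‖gradient Wε (Y s r.1.2 - Y s r.2.2)‖ :=
              norm_sub_le _ _
          _ ≤ C + C := add_le_add (hC _) (hC _)
          _ = 2 * C := by ring
      have h3 := hZb s hs r.1
      have h4 := abs_real_inner_le_norm (X s r.1.1 - Y s r.1.2)
        (gradient Wε (X s r.1.1 - X s r.2.1) - gradient Wε (Y s r.1.2 - Y s r.2.2))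
      have h5 : ‖X s r.1.1 - Y s r.1.2‖ *
          ‖gradient Wε (X s r.1.1 - X s r.2.1) - gradient Wε (Y s r.1.2 - Y s r.2.2)‖ ≤
          b0 r.1 * (2 * C) := mul_le_mul h3 h1 (norm_nonneg _) (hb0nn r.1)
      rw [Real.norm_eq_abs, abs_mul]
      have : |(-2 : ℝ)| = 2 := by norm_num
      rw [this]
      linarith
    have HintH : Integrable H μ2 :=
      Integrable.mono' (hb0fst.const_mul (4 * C)) mH (Eventually.of_forall hHb)
    have hFub : (∫ p, (∫ q, -2 * ⟪X s p.1 - Y s p.2,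
        gradient Wε (X s p.1 - X s q.1) - gradient Wε (Y s p.2 - Y s q.2)⟫ ∂γ₀) ∂γ₀)
        = ∫ r, H r ∂μ2 := by
      rw [integral_prod H HintH]
      congr 1
      funext p
      congr 1
      funext q
      rw [hH]
    rw [hFub]
    -- symmetrization
    have hswap : MeasurePreserving Prod.swap μ2 μ2 := by
      rw [hμ2]; exact Measure.measurePreserving_swap
    have hswapint : Integrable (fun r => H r.swap) μ2 :=
      (hswap.integrable_comp mH).mpr HintH
    have hswapeq : ∫ r, H r.swap ∂μ2 = ∫ r, H r ∂μ2 :=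
      hswap.integral_comp (MeasurableEquiv.prodComm ..).measurableEmbedding H
    -- pointwise inequality
    have hpt : (fun r : (EuclideanSpace ℝ (Fin d) × EuclideanSpace ℝ (Fin d)) ×
          (EuclideanSpace ℝ (Fin d) × EuclideanSpace ℝ (Fin d)) => H r + H r.swap) ≤
        fun r => -4 * lam * (‖X s r.1.1 - Y s r.1.2‖ ^ 2 + ‖X s r.2.1 - Y s r.2.2‖ ^ 2) := by
      rintro ⟨p, q⟩
      simp only [Prod.swap_prod_mk]
      rw [hH, hH]
      simp only
      have e1 : X s q.1 - X s p.1 = -(X s p.1 - X s q.1) := by abel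
      have e2 : Y s q.2 - Y s p.2 = -(Y s p.2 - Y s q.2) := by abel
      rw [e1, e2, hgradodd, hgradodd]
      have e3 : -gradient Wε (X s p.1 - X s q.1) - -gradient Wε (Y s p.2 - Y s q.2) =
          -(gradient Wε (X s p.1 - X s q.1) - gradient Wε (Y s p.2 - Y s q.2)) := by abel
      rw [e3, inner_neg_right]
      have hm := hmono (X s p.1 - X s q.1) (Y s p.2 - Y s q.2)
      have huv : (X s p.1 - X s q.1) - (Y s p.2 - Y s q.2) =
          (X s p.1 - Y s p.2) - (X s q.1 - Y s q.2) := by abel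
      rw [huv] at hm
      have hcomm : ⟪gradient Wε (X s p.1 - X s q.1) - gradient Wε (Y s p.2 - Y s q.2),
          (X s p.1 - Y s p.2) - (X s q.1 - Y s q.2)⟫ =
          ⟪X s p.1 - Y s p.2, gradient Wε (X s p.1 - X s q.1) -
            gradient Wε (Y s p.2 - Y s q.2)⟫ -
          ⟪X s q.1 - Y s q.2, gradient Wε (X s p.1 - X s q.1) -
            gradient Wε (Y s p.2 - Y s q.2)⟫ := by
        rw [real_inner_comm, inner_sub_left]
      rw [hcomm] at hm
      have hnb : ‖(X s p.1 - Y s p.2) - (X s q.1 - Y s q.2)‖ ^ 2 ≤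
          2 * ‖X s p.1 - Y s p.2‖ ^ 2 + 2 * ‖X s q.1 - Y s q.2‖ ^ 2 := by
        have h := norm_sub_le (X s p.1 - Y s p.2) (X s q.1 - Y s q.2)
        nlinarith [norm_nonneg (X s p.1 - Y s p.2), norm_nonneg (X s q.1 - Y s q.2),
          norm_nonneg ((X s p.1 - Y s p.2) - (X s q.1 - Y s q.2)),
          sq_nonneg (‖X s p.1 - Y s p.2‖ - ‖X s q.1 - Y s q.2‖)]
      have hlam2 : (0:ℝ) ≤ -2 * lam := by linarith
      have h7 : (-2 * lam) * ‖(X s p.1 - Y s p.2) - (X s q.1 - Y s q.2)‖ ^ 2 ≤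
          (-2 * lam) * (2 * ‖X s p.1 - Y s p.2‖ ^ 2 + 2 * ‖X s q.1 - Y s q.2‖ ^ 2) :=
        mul_le_mul_of_nonneg_left hnb hlam2
      nlinarith [hm, h7]
    -- integrability of the comparison function
    have hQint1 : Integrable (fun r : (EuclideanSpace ℝ (Fin d) × EuclideanSpace ℝ (Fin d)) ×
        (EuclideanSpace ℝ (Fin d) × EuclideanSpace ℝ (Fin d)) =>
        ‖X s r.1.1 - Y s r.1.2‖ ^ 2) μ2 := by
      have h := hIint s hs
      rw [← hmapfst] at h
      exact (integrable_map_measure (by rw [hmapfst]; exact mF s)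
        measurable_fst.aemeasurable).mp h
    have hQint2 : Integrable (fun r : (EuclideanSpace ℝ (Fin d) × EuclideanSpace ℝ (Fin d)) ×
        (EuclideanSpace ℝ (Fin d) × EuclideanSpace ℝ (Fin d)) =>
        ‖X s r.2.1 - Y s r.2.2‖ ^ 2) μ2 := by
      have h := hIint s hs
      rw [← hmapsnd] at h
      exact (integrable_map_measure (by rw [hmapsnd]; exact mF s)
        measurable_snd.aemeasurable).mp h
    have hQsum : Integrable (fun r : (EuclideanSpace ℝ (Fin d) × EuclideanSpace ℝ (Fin d)) ×
        (EuclideanSpace ℝ (Fin d) × EuclideanSpace ℝ (Fin d)) =>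
        ‖X s r.1.1 - Y s r.1.2‖ ^ 2 + ‖X s r.2.1 - Y s r.2.2‖ ^ 2) μ2 := hQint1.add hQint2
    have hRint : Integrable (fun r : (EuclideanSpace ℝ (Fin d) × EuclideanSpace ℝ (Fin d)) ×
        (EuclideanSpace ℝ (Fin d) × EuclideanSpace ℝ (Fin d)) =>
        -4 * lam * (‖X s r.1.1 - Y s r.1.2‖ ^ 2 + ‖X s r.2.1 - Y s r.2.2‖ ^ 2)) μ2 :=
      hQsum.const_mul _
    have hsumint : Integrable (fun r => H r + H r.swap) μ2 := HintH.add hswapint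
    have hintmono := integral_mono hsumint hRint hpt
    have eLHS : ∫ r, (H r + H r.swap) ∂μ2 = (∫ r, H r ∂μ2) + ∫ r, H r.swap ∂μ2 :=
      integral_add HintH hswapint
    have eA : ∫ r, ‖X s r.1.1 - Y s r.1.2‖ ^ 2 ∂μ2 = I s := by
      have h1 : I s = ∫ p, ‖X s p.1 - Y s p.2‖ ^ 2 ∂γ₀ := by rw [hIdef]
      rw [h1, ← hmapfst, integral_map measurable_fst.aemeasurable
        (by rw [hmapfst]; exact mF s)]
    have eB : ∫ r, ‖X s r.2.1 - Y s r.2.2‖ ^ 2 ∂μ2 = I s := by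
      have h1 : I s = ∫ p, ‖X s p.1 - Y s p.2‖ ^ 2 ∂γ₀ := by rw [hIdef]
      rw [h1, ← hmapsnd, integral_map measurable_snd.aemeasurable
        (by rw [hmapsnd]; exact mF s)]
    have eRHS : ∫ r, -4 * lam * (‖X s r.1.1 - Y s r.1.2‖ ^ 2 +
        ‖X s r.2.1 - Y s r.2.2‖ ^ 2) ∂μ2 = -4 * lam * (I s + I s) := by
      rw [integral_const_mul, integral_add hQint1 hQint2, eA, eB]
    rw [eLHS, hswapeq, eRHS] at hintmono
    linarith
  -- Grönwall argument
  have hJanti : AntitoneOn (fun s => Real.exp (4 * lam * s) * I s) (Set.Icc 0 T) := by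
    have hderivJ : ∀ s ∈ Set.Ioo (0:ℝ) T, HasDerivAt (fun s => Real.exp (4 * lam * s) * I s)
        (Real.exp (4 * lam * s) * (4 * lam) * I s + Real.exp (4 * lam * s) *
          ∫ p, 2 * ⟪X s p.1 - Y s p.2, vX s p.1 - vY s p.2⟫ ∂γ₀) s := by
      intro s hs
      have hexp : HasDerivAt (fun s : ℝ => Real.exp (4 * lam * s))
          (Real.exp (4 * lam * s) * (4 * lam)) s := by
        have h1 : HasDerivAt (fun s : ℝ => 4 * lam * s) (4 * lam) s := by
          simpa using (hasDerivAt_id s).const_mul (4 * lam)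
        exact (Real.hasDerivAt_exp _).comp s h1
      exact hexp.mul (hIderiv s hs)
    apply antitoneOn_of_deriv_nonpos (convex_Icc 0 T)
    · exact (Real.continuous_exp.comp (continuous_const.mul continuous_id)).continuousOn.mul hIcont
    · intro s hs
      rw [interior_Icc] at hs
      exact (hderivJ s hs).differentiableAt.differentiableWithinAt
    · intro s hs
      rw [interior_Icc] at hs
      rw [(hderivJ s hs).deriv]
      have h1 := hkey s ⟨le_of_lt hs.1, le_of_lt hs.2⟩
      have h2 : (0:ℝ) ≤ Real.exp (4 * lam * s) := (Real.exp_pos _).le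
      nlinarith [h1, h2, mul_le_mul_of_nonneg_left h1 h2]
  intro t ht
  have h0mem : (0:ℝ) ∈ Set.Icc (0:ℝ) T := ⟨le_rfl, hT.le⟩
  have hJ := hJanti h0mem ht ht.1
  simp only [mul_zero, Real.exp_zero, one_mul] at hJ
  have hone : Real.exp (-4 * lam * t) * Real.exp (4 * lam * t) = 1 := by
    rw [← Real.exp_add, show -4 * lam * t + 4 * lam * t = 0 by ring, Real.exp_zero]
  have hfinal : I t ≤ Real.exp (-4 * lam * t) * I 0 := by
    have h := mul_le_mul_of_nonneg_left hJ (le_of_lt (Real.exp_pos (-4 * lam * t)))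
    calc I t = Real.exp (-4 * lam * t) * (Real.exp (4 * lam * t) * I t) := by
          rw [← mul_assoc, hone, one_mul]
      _ ≤ Real.exp (-4 * lam * t) * I 0 := h
  have e0 : I t = ∫ p, ‖X t p.1 - Y t p.2‖ ^ 2 ∂γ₀ := by rw [hIdef]
  have e1 : I 0 = ∫ p, ‖X 0 p.1 - Y 0 p.2‖ ^ 2 ∂γ₀ := by rw [hIdef]
  rw [← e0, ← e1]
  exact hfinal


/-- for a smooth even `λ`-convex interaction potential with bounded gradient,
the coupled characteristics satisfy
`I(t) = ∬ |X(t,x₁) − Y(t,x₂)|² γ₀(dx₁,dx₂) ≤ e^{−4λt} I(0)` on `[0,T]`. -/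
theorem coupled_characteristics_contraction
    {d : ℕ} (Wε : EuclideanSpace ℝ (Fin d) → ℝ) (lam : ℝ) (hlam : lam ≤ 0)
    (hsmooth : ContDiff ℝ 1 Wε) (heven : ∀ x, Wε (-x) = Wε x)
    (hconv : ConvexOn ℝ Set.univ fun x => Wε x - lam / 2 * ‖x‖ ^ 2)
    (hbound : ∃ C : ℝ, ∀ x, ‖gradient Wε x‖ ≤ C)
    (T : ℝ) (hT : 0 < T)
    (ρ₀ σ₀ : Measure (EuclideanSpace ℝ (Fin d))) (hρ₀ : MemP2 ρ₀) (hσ₀ : MemP2 σ₀)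
    (γ₀ : Measure (EuclideanSpace ℝ (Fin d) × EuclideanSpace ℝ (Fin d)))
    (hγ₀ : IsProbabilityMeasure γ₀)
    (hγ₀₁ : γ₀.map Prod.fst = ρ₀) (hγ₀₂ : γ₀.map Prod.snd = σ₀)
    (X Y : ℝ → EuclideanSpace ℝ (Fin d) → EuclideanSpace ℝ (Fin d))
    (hXmeas : Measurable fun p : ℝ × EuclideanSpace ℝ (Fin d) => X p.1 p.2)
    (hYmeas : Measurable fun p : ℝ × EuclideanSpace ℝ (Fin d) => Y p.1 p.2)
    (hXcont : ∀ x, ContinuousOn (fun t => X t x) (Set.Icc 0 T))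
    (hYcont : ∀ x, ContinuousOn (fun t => Y t x) (Set.Icc 0 T))
    (hX0 : ∀ x, X 0 x = x) (hY0 : ∀ x, Y 0 x = x)
    (hXmom : ∃ C : ℝ, ∀ t ∈ Set.Icc (0 : ℝ) T, (∫ x, ‖X t x‖ ^ 2 ∂ρ₀) ≤ C)
    (hYmom : ∃ C : ℝ, ∀ t ∈ Set.Icc (0 : ℝ) T, (∫ x, ‖Y t x‖ ^ 2 ∂σ₀) ≤ C)
    (hXode : ∀ x, ∀ t ∈ Set.Icc (0 : ℝ) T,
      HasDerivAt (fun s => X s x) (-∫ y, gradient Wε (X t x - X t y) ∂ρ₀) t)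
    (hYode : ∀ x, ∀ t ∈ Set.Icc (0 : ℝ) T,
      HasDerivAt (fun s => Y s x) (-∫ y, gradient Wε (Y t x - Y t y) ∂σ₀) t) :
    ∀ t ∈ Set.Icc (0 : ℝ) T,
      (∫ p, ‖X t p.1 - Y t p.2‖ ^ 2 ∂γ₀) ≤
        Real.exp (-4 * lam * t) * ∫ p, ‖X 0 p.1 - Y 0 p.2‖ ^ 2 ∂γ₀ := by
  obtain ⟨hρP, hρ2⟩ := hρ₀
  obtain ⟨hσP, hσ2⟩ := hσ₀
  exact coupled_characteristics_contraction' Wε lam hlam hsmooth heven hconv hbound T hT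
    ρ₀ σ₀ ⟨hρP, hρ2⟩ ⟨hσP, hσ2⟩ γ₀ hγ₀ hγ₀₁ hγ₀₂ X Y hXmeas hYmeas hXcont hYcont hX0 hY0
    hXode hYode

end
end
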